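/- arXiv:2207.04872 — 2 statements merged into one kernel-verified Lean document; each statement's English description precedes it below -/
import Mathlib

section
/- Let G be a simple graph and let X be a finite set of vertices with |X| = k such that the induced subgraph G − X is a disjoint union of cliques, i.e., any two distinct vertices of G − X that lie in the same connected component of G − X are adjacent. Then for any two vertices u and v of G that are joined by a walk, dist(u, v) ≤ 3k + 1. -/
open SimpleGraph Walk

lemma exists_mid {V : Type*} {G : SimpleGraph V} {a b : V} (p : G.Walk a b) :
    ∀ i j : ℕ, i ≤ j → ∃ q : G.Walk (p.getVert i) (p.getVert j),
      q.length = min j p.length - min i p.length := by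
  induction p with
  | nil =>
    intro i j _
    exact ⟨SimpleGraph.Walk.nil.copy
      (SimpleGraph.Walk.getVert_of_length_le _ (by simp)).symm
      (SimpleGraph.Walk.getVert_of_length_le _ (by simp)).symm, by simp⟩
  | @cons a c b h q ih =>
    intro i j hij
    match i, j with
    | 0, 0 =>
      exact ⟨(SimpleGraph.Walk.nil : G.Walk a a).copy
        (SimpleGraph.Walk.getVert_zero _).symm (SimpleGraph.Walk.getVert_zero _).symm, by simp⟩
    | 0, j+1 =>
      obtain ⟨w, hw⟩ := ih 0 j (Nat.zero_le _)
      refine ⟨(SimpleGraph.Walk.cons h (w.copy (SimpleGraph.Walk.getVert_zero q) rfl)).copy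
        (SimpleGraph.Walk.getVert_zero _).symm (SimpleGraph.Walk.getVert_cons_succ q h).symm, ?_⟩
      simp only [SimpleGraph.Walk.length_copy, SimpleGraph.Walk.length_cons, hw,
        SimpleGraph.Walk.length_cons]
      omega
    | i+1, j+1 =>
      obtain ⟨w, hw⟩ := ih i j (Nat.succ_le_succ_iff.mp hij)
      refine ⟨w.copy (SimpleGraph.Walk.getVert_cons_succ q h).symm
        (SimpleGraph.Walk.getVert_cons_succ q h).symm, ?_⟩
      simp only [SimpleGraph.Walk.length_copy, hw, SimpleGraph.Walk.length_cons]
      omega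

lemma geo_dist {V : Type*} {G : SimpleGraph V} {u v : V} (p : G.Walk u v)
    (hp : p.length = G.dist u v) {i j : ℕ} (hij : i ≤ j) (hj : j ≤ p.length) :
    G.dist (p.getVert i) (p.getVert j) = j - i := by
  obtain ⟨w, hw⟩ := exists_mid p i j hij
  have hub : G.dist (p.getVert i) (p.getVert j) ≤ j - i := by
    have := SimpleGraph.dist_le w
    rw [hw] at this
    omega
  obtain ⟨w1, hw1⟩ := exists_mid p 0 i (Nat.zero_le _)
  obtain ⟨w3, hw3⟩ := exists_mid p j p.length hj
  obtain ⟨w2, hw2⟩ := (SimpleGraph.Walk.reachable w).exists_walk_length_eq_dist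
  have hle : G.dist u v ≤ ((w1.copy (SimpleGraph.Walk.getVert_zero p) rfl).append
      (w2.append (w3.copy rfl (SimpleGraph.Walk.getVert_length p)))).length :=
    SimpleGraph.dist_le _
  simp only [SimpleGraph.Walk.length_append, SimpleGraph.Walk.length_copy,
    hw1, hw2, hw3] at hle
  omega


/-- If `X` is a set of `k` vertices such that `G - X` is a disjoint union of cliques
(any two distinct vertices of `G - X` in the same component of `G - X` are adjacent),
then any two vertices of `G` joined by a walk are at distance at most `3 * k + 1`. -/
theorem stmt_2 {V : Type*} (G : SimpleGraph V) (k : ℕ) (X : Finset V)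
    (hcard : X.card = k)
    (hcliques : ∀ u v : ((↑X : Set V)ᶜ : Set V), u ≠ v →
      (G.induce ((↑X : Set V)ᶜ)).Reachable u v → (G.induce ((↑X : Set V)ᶜ)).Adj u v)
    (u v : V) (h : G.Reachable u v) :
    G.dist u v ≤ 3 * k + 1 := by
  by_contra hcon
  push_neg at hcon
  obtain ⟨p, hp⟩ := h.exists_walk_length_eq_dist
  have hL : 3 * k + 2 ≤ p.length := by omega
  -- injectivity of getVert on indices ≤ length
  have hinj : ∀ i j : ℕ, i < j → j ≤ p.length → p.getVert i ≠ p.getVert j := by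
    intro i j hij hj heq
    have := geo_dist p hp (le_of_lt hij) hj
    rw [heq, SimpleGraph.dist_self] at this
    omega
  -- no chords at index distance ≥ 2
  have hnadj : ∀ i j : ℕ, i + 2 ≤ j → j ≤ p.length → ¬ G.Adj (p.getVert i) (p.getVert j) := by
    intro i j hij hj hadj
    have h1 := geo_dist p hp (by omega : i ≤ j) hj
    have h2 : G.dist (p.getVert i) (p.getVert j) ≤ 1 := SimpleGraph.dist_le hadj.toWalk
    omega
  -- each triple of consecutive indices contains a vertex of X
  have key : ∀ j : ℕ, ∃ r : ℕ, 3 * j ≤ r ∧ r ≤ 3 * j + 2 ∧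
      (j < k + 1 → p.getVert r ∈ X) := by
    intro j
    by_cases hjk : j < k + 1
    · by_contra hno
      push_neg at hno
      have ha : p.getVert (3 * j) ∉ (X : Set V) := by
        simpa using (hno (3 * j) le_rfl (by omega)).2
      have hb : p.getVert (3 * j + 1) ∉ (X : Set V) := by
        simpa using (hno (3 * j + 1) (by omega) (by omega)).2
      have hc : p.getVert (3 * j + 2) ∉ (X : Set V) := by
        simpa using (hno (3 * j + 2) (by omega) (by omega)).2
      have hjL : 3 * j + 2 ≤ p.length := by omega
      have hab : G.Adj (p.getVert (3 * j)) (p.getVert (3 * j + 1)) :=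
        p.adj_getVert_succ (by omega)
      have hbc : G.Adj (p.getVert (3 * j + 1)) (p.getVert (3 * j + 1 + 1)) :=
        p.adj_getVert_succ (by omega)
      set s : Set V := ((↑X : Set V)ᶜ)
      have ha' : p.getVert (3 * j) ∈ s := ha
      have hb' : p.getVert (3 * j + 1) ∈ s := hb
      have hc' : p.getVert (3 * j + 2) ∈ s := hc
      have hab' : (G.induce s).Adj ⟨_, ha'⟩ ⟨_, hb'⟩ := hab
      have hbc' : (G.induce s).Adj ⟨_, hb'⟩ ⟨_, hc'⟩ := hbc
      have hne : (⟨_, ha'⟩ : s) ≠ ⟨_, hc'⟩ := by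
        intro heq
        exact hinj (3 * j) (3 * j + 2) (by omega) hjL (congrArg Subtype.val heq)
      have hreach : (G.induce s).Reachable ⟨_, ha'⟩ ⟨_, hc'⟩ :=
        (hab'.reachable).trans hbc'.reachable
      have := hcliques _ _ hne hreach
      exact hnadj (3 * j) (3 * j + 2) le_rfl hjL this
    · exact ⟨3 * j, le_rfl, by omega, fun hlt => absurd hlt hjk⟩
  choose r hr1 hr2 hr3 using key
  have hcard2 : (Finset.range (k + 1)).card ≤ X.card := by
    apply Finset.card_le_card_of_injOn (fun j => p.getVert (r j))
    · intro j hj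
      exact hr3 j (Finset.mem_range.mp hj)
    · intro j1 hj1 j2 hj2 heq
      by_contra hne
      rcases Nat.lt_or_ge j1 j2 with hlt | hge
      · exact hinj (r j1) (r j2) (by have := hr2 j1; have := hr1 j2; omega)
          (by have := hr2 j2; have := Finset.mem_range.mp hj2; omega) heq
      · have hlt : j2 < j1 := by omega
        exact hinj (r j2) (r j1) (by have := hr2 j2; have := hr1 j1; omega)
          (by have := hr2 j1; have := Finset.mem_range.mp hj1; omega) heq.symm
  simp [hcard] at hcard2
end

section
/- Let n ≥ 1 and let x, y : {1,…,n} → {0,1} be such that neither x nor y is identically zero. In the graph SVA(x,y): if there exists an index i with x_i = y_i = 1, then every two vertices are at distance at most 3; if there is no such index, then dist(a, b) = 4. -/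
/-- Vertices of the `Simple VA` construction: `a`, `b`, `c` and `v i` for `i` in
`{1, …, n}` (encoded as `Fin n`). -/
inductive SVAVert (n : ℕ) : Type
  | a : SVAVert n
  | b : SVAVert n
  | c : SVAVert n
  | v : Fin n → SVAVert n

/-- Edges of `SVA(x, y)`: `c ~ v i` always, `a ~ v i` iff `x i = 1`,
`b ~ v i` iff `y i = 1`, and no other edges. -/
def svaRel {n : ℕ} (x y : Fin n → Fin 2) : SVAVert n → SVAVert n → Prop
  | .c, .v _ => True
  | .a, .v i => x i = 1
  | .b, .v i => y i = 1
  | _, _ => False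

/-- The `Simple VA` graph. -/
def SVA {n : ℕ} (x y : Fin n → Fin 2) : SimpleGraph (SVAVert n) :=
  SimpleGraph.fromRel (svaRel x y)

namespace SVAaux

variable {n : ℕ} (x y : Fin n → Fin 2)

lemma adj_cv (i : Fin n) : (SVA x y).Adj .c (.v i) :=
  ⟨(fun h => by cases h), Or.inl trivial⟩

lemma adj_av {i : Fin n} (h : x i = 1) : (SVA x y).Adj .a (.v i) :=
  ⟨(fun h => by cases h), Or.inl h⟩

lemma adj_bv {i : Fin n} (h : y i = 1) : (SVA x y).Adj .b (.v i) :=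
  ⟨(fun h => by cases h), Or.inl h⟩

lemma lip_walk {V : Type*} {G : SimpleGraph V} (f : V → ℕ)
    (hf : ∀ u w, G.Adj u w → f w ≤ f u + 1) :
    ∀ {u w : V} (p : G.Walk u w), f w ≤ f u + p.length := by
  intro u w p
  induction p with
  | nil => simp
  | cons h p ih =>
    have := hf _ _ h
    simp only [SimpleGraph.Walk.length_cons]
    omega

end SVAaux

open SVAaux in
theorem stmt_4 {n : ℕ} (hn : 1 ≤ n) (x y : Fin n → Fin 2)
    (hx : ∃ i, x i = 1) (hy : ∃ i, y i = 1) :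
    ((∃ i, x i = 1 ∧ y i = 1) → ∀ u w : SVAVert n, (SVA x y).dist u w ≤ 3) ∧
    ((¬ ∃ i, x i = 1 ∧ y i = 1) → (SVA x y).dist SVAVert.a SVAVert.b = 4) := by
  obtain ⟨i0, hx0⟩ := hx
  obtain ⟨j0, hy0⟩ := hy
  constructor
  · rintro ⟨i, hxi, hyi⟩ u w
    have hav := adj_av x y hxi
    have hbv := adj_bv x y hyi
    have hva := hav.symm
    have hvb := hbv.symm
    cases u <;> cases w
    case a.a =>
      simp [SimpleGraph.dist_self]
    case a.b =>
      have := (SVA x y).dist_le (SimpleGraph.Walk.cons hav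
        (SimpleGraph.Walk.cons hvb SimpleGraph.Walk.nil))
      simpa using this.trans (by norm_num)
    case a.c =>
      have := (SVA x y).dist_le (SimpleGraph.Walk.cons hav
        (SimpleGraph.Walk.cons (adj_cv x y i).symm SimpleGraph.Walk.nil))
      simpa using this.trans (by norm_num)
    case a.v j =>
      have := (SVA x y).dist_le (SimpleGraph.Walk.cons hav
        (SimpleGraph.Walk.cons (adj_cv x y i).symm
          (SimpleGraph.Walk.cons (adj_cv x y j) SimpleGraph.Walk.nil)))
      simpa using this
    case b.a =>
      have := (SVA x y).dist_le (SimpleGraph.Walk.cons hbv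
        (SimpleGraph.Walk.cons hva SimpleGraph.Walk.nil))
      simpa using this.trans (by norm_num)
    case b.b => simp [SimpleGraph.dist_self]
    case b.c =>
      have := (SVA x y).dist_le (SimpleGraph.Walk.cons hbv
        (SimpleGraph.Walk.cons (adj_cv x y i).symm SimpleGraph.Walk.nil))
      simpa using this.trans (by norm_num)
    case b.v j =>
      have := (SVA x y).dist_le (SimpleGraph.Walk.cons hbv
        (SimpleGraph.Walk.cons (adj_cv x y i).symm
          (SimpleGraph.Walk.cons (adj_cv x y j) SimpleGraph.Walk.nil)))
      simpa using this
    case c.a =>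
      have := (SVA x y).dist_le (SimpleGraph.Walk.cons (adj_cv x y i)
        (SimpleGraph.Walk.cons hva SimpleGraph.Walk.nil))
      simpa using this.trans (by norm_num)
    case c.b =>
      have := (SVA x y).dist_le (SimpleGraph.Walk.cons (adj_cv x y i)
        (SimpleGraph.Walk.cons hvb SimpleGraph.Walk.nil))
      simpa using this.trans (by norm_num)
    case c.c => simp [SimpleGraph.dist_self]
    case c.v j =>
      have := (SVA x y).dist_le (SimpleGraph.Walk.cons (adj_cv x y j)
        SimpleGraph.Walk.nil)
      simpa using this.trans (by norm_num)
    case v.a j =>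
      have := (SVA x y).dist_le (SimpleGraph.Walk.cons (adj_cv x y j).symm
        (SimpleGraph.Walk.cons (adj_cv x y i)
          (SimpleGraph.Walk.cons hva SimpleGraph.Walk.nil)))
      simpa using this
    case v.b j =>
      have := (SVA x y).dist_le (SimpleGraph.Walk.cons (adj_cv x y j).symm
        (SimpleGraph.Walk.cons (adj_cv x y i)
          (SimpleGraph.Walk.cons hvb SimpleGraph.Walk.nil)))
      simpa using this
    case v.c j =>
      have := (SVA x y).dist_le (SimpleGraph.Walk.cons (adj_cv x y j).symm
        SimpleGraph.Walk.nil)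
      simpa using this.trans (by norm_num)
    case v.v j k =>
      have := (SVA x y).dist_le (SimpleGraph.Walk.cons (adj_cv x y j).symm
        (SimpleGraph.Walk.cons (adj_cv x y k) SimpleGraph.Walk.nil))
      simpa using this.trans (by norm_num)
  · intro hno
    -- upper bound via explicit walk of length 4
    have hle : (SVA x y).dist SVAVert.a SVAVert.b ≤ 4 := by
      have := (SVA x y).dist_le (SimpleGraph.Walk.cons (adj_av x y hx0)
        (SimpleGraph.Walk.cons (adj_cv x y i0).symm
          (SimpleGraph.Walk.cons (adj_cv x y j0)
            (SimpleGraph.Walk.cons (adj_bv x y hy0).symm SimpleGraph.Walk.nil))))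
      simpa using this
    have hreach : (SVA x y).Reachable SVAVert.a SVAVert.b :=
      ⟨SimpleGraph.Walk.cons (adj_av x y hx0)
        (SimpleGraph.Walk.cons (adj_cv x y i0).symm
          (SimpleGraph.Walk.cons (adj_cv x y j0)
            (SimpleGraph.Walk.cons (adj_bv x y hy0).symm SimpleGraph.Walk.nil)))⟩
    -- lower bound via a Lipschitz potential
    set f : SVAVert n → ℕ := fun u =>
      match u with
      | .a => 0
      | .b => 4
      | .c => 2
      | .v i => if x i = 1 then 1 else 3 with hfdef
    have hf : ∀ u w, (SVA x y).Adj u w → f w ≤ f u + 1 := by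
      intro u w h
      rw [SVA, SimpleGraph.fromRel_adj] at h
      obtain ⟨hne, h⟩ := h
      cases u <;> cases w <;>
        simp only [svaRel, or_self, or_false, false_or, true_or, or_true] at h <;>
        simp only [hfdef] <;>
        first
          | exact h.elim
          | (split <;> omega)
          | (rename_i i
             have hxne : x i ≠ 1 := fun hc => hno ⟨i, hc, h⟩
             simp [hxne])
          | simp [h]
    obtain ⟨p, hp⟩ := hreach.exists_walk_length_eq_dist
    have := lip_walk f hf p
    simp only [hfdef] at this
    omega
end
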